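/- Let X be a real locally convex topological vector space, Q a compact Hausdorff space, f: Q → X continuous, and suppose the closed convex hull K of f(Q) is compact. Then for any Borel probability measure μ on Q, the Pettis integral y = ∫_Q f dμ exists (i.e., there is y ∈ X with Λy = ∫_Q Λ(f(x)) dμ(x) for all continuous linear functionals Λ), and y ∈ K. -/

import Mathlib

open MeasureTheory

theorem stmt_12 (X : Type*) [AddCommGroup X] [Module ℝ X] [TopologicalSpace X]
    [IsTopologicalAddGroup X] [ContinuousSMul ℝ X] [LocallyConvexSpace ℝ X]
    (Q : Type*) [TopologicalSpace Q] [CompactSpace Q] [T2Space Q]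
    [MeasurableSpace Q] [BorelSpace Q]
    (f : Q → X) (hf : Continuous f)
    (hK : IsCompact (closure (convexHull ℝ (Set.range f))))
    (μ : Measure Q) [IsProbabilityMeasure μ] :
    ∃ y ∈ closure (convexHull ℝ (Set.range f)),
      ∀ Λ : X →L[ℝ] ℝ, Integrable (fun x => Λ (f x)) μ ∧ Λ y = ∫ x, Λ (f x) ∂μ := by
  set K := closure (convexHull ℝ (Set.range f)) with hKdef
  have hKconv : Convex ℝ K := (convex_convexHull ℝ _).closure
  have hfK : ∀ x, f x ∈ K := fun x =>
    subset_closure (subset_convexHull ℝ _ ⟨x, rfl⟩)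
  -- integrability of any continuous real function on Q
  have hint : ∀ g : Q → ℝ, Continuous g → Integrable g μ := by
    intro g hg
    exact hg.integrable_of_hasCompactSupport
      (IsCompact.of_isClosed_subset isCompact_univ (isClosed_tsupport g)
        (Set.subset_univ _))
  have hintΛ : ∀ Λ : X →L[ℝ] ℝ, Integrable (fun x => Λ (f x)) μ := fun Λ =>
    hint _ (Λ.continuous.comp hf)
  -- the closed sets
  set t : (X →L[ℝ] ℝ) → Set X := fun Λ => {y | Λ y = ∫ x, Λ (f x) ∂μ} with ht
  have htc : ∀ Λ, IsClosed (t Λ) := fun Λ =>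
    isClosed_eq Λ.continuous continuous_const
  have hfin : ∀ u : Finset (X →L[ℝ] ℝ), (K ∩ ⋂ Λ ∈ u, t Λ).Nonempty := by
    intro u
    classical
    set L : X →L[ℝ] (u → ℝ) := ContinuousLinearMap.pi (fun Λ => (Λ : X →L[ℝ] ℝ)) with hL
    have hLK : IsCompact (L '' K) := hK.image L.continuous
    have hLKconv : Convex ℝ (L '' K) := hKconv.linear_image L.toLinearMap
    have hg : Integrable (fun x => L (f x)) μ := by
      refine (Continuous.integrable_of_hasCompactSupport (L.continuous.comp hf) ?_)
      exact IsCompact.of_isClosed_subset isCompact_univ (isClosed_tsupport _)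
        (Set.subset_univ _)
    have hz : (∫ x, L (f x) ∂μ) ∈ L '' K :=
      hLKconv.integral_mem hLK.isClosed
        (Filter.Eventually.of_forall fun x => ⟨f x, hfK x, rfl⟩) hg
    obtain ⟨y, hyK, hLy⟩ := hz
    refine ⟨y, hyK, ?_⟩
    simp only [Set.mem_iInter]
    intro Λ hΛ
    have hproj : (∫ x, L (f x) ∂μ) ⟨Λ, hΛ⟩ = ∫ x, Λ (f x) ∂μ := by
      have := (ContinuousLinearMap.proj (R := ℝ) (φ := fun _ : u => ℝ)
        ⟨Λ, hΛ⟩).integral_comp_comm hg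
      simpa [hL] using this.symm
    have : (L y) ⟨Λ, hΛ⟩ = ∫ x, Λ (f x) ∂μ := by rw [hLy, hproj]
    simpa [hL, ht] using this
  obtain ⟨y, hyK, hy⟩ := hK.inter_iInter_nonempty t htc hfin
  simp only [Set.mem_iInter] at hy
  exact ⟨y, hyK, fun Λ => ⟨hintΛ Λ, hy Λ⟩⟩
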